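/- Given a homeomorphism φ of the Cantor space normalizing V, there exists a unique map γ_φ : Q₂ → ℤ with γ_φ(v·0) = log₂((φ^{-1}vφ)'(φ^{-1}0)) − k_φ·log₂(v'(0)) for all v ∈ V, and this map satisfies γ_φ(vx) − γ_φ(x) = log₂((φ^{-1}vφ)'(φ^{-1}x)) − k_φ·log₂(v'(x)) for all v ∈ V and x ∈ Q₂. -/

import Mathlib

/-! Basic setup: the Cantor space, prefix replacement, Thompson's group `V`,
slopes, dyadic rationals, standard dyadic partitions, locally constant maps,
and the permutation model of the twisted fraction groups `LΓ ⋊ V`. -/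

abbrev Cantor : Type := ℕ → Bool

/-- Concatenation of a finite word with an infinite sequence. -/
def cat (w : List Bool) (x : Cantor) : Cantor :=
  fun n => if n < w.length then w.getD n false else x (n - w.length)

/-- The standard dyadic interval (cylinder) associated to a finite word. -/
def cyl (w : List Bool) : Set Cantor := {x | ∃ y : Cantor, x = cat w y}

/-- Membership in Thompson's group `V`: a homeomorphism of the Cantor space which is
everywhere locally given by prefix replacement. -/
def memV (v : Cantor ≃ₜ Cantor) : Prop :=
  ∀ x : Cantor, ∃ (m w : List Bool) (y : Cantor),
    x = cat m y ∧ ∀ z : Cantor, v (cat m z) = cat w z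

/-- `HasLogSlope v x k` : `k = log₂ v'(x)`, base-2 logarithm of the slope of `v` at `x`. -/
def HasLogSlope (v : Cantor ≃ₜ Cantor) (x : Cantor) (k : ℤ) : Prop :=
  ∃ (m w : List Bool) (y : Cantor),
    x = cat m y ∧ (∀ z : Cantor, v (cat m z) = cat w z) ∧
      k = (m.length : ℤ) - (w.length : ℤ)

open Classical in
noncomputable def logSlope (v : Cantor ≃ₜ Cantor) (x : Cantor) : ℤ :=
  if h : ∃ k : ℤ, HasLogSlope v x k then h.choose else 0

/-- The eventually periodic sequence `c∞ = c·c·c⋯`. -/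
def tailSeq (c : List Bool) : Cantor := fun n => c.getD (n % c.length) false

/-- `x` lies in the tail equivalence class of the word `c`, i.e. `x = y·c∞`. -/
def InTailClass (x : Cantor) (c : List Bool) : Prop :=
  ∃ y : List Bool, x = cat y (tailSeq c)

/-- `x` is eventually periodic (a rational point of the Cantor space). -/
def EvPeriodic (x : Cantor) : Prop :=
  ∃ (y c : List Bool), c ≠ [] ∧ x = cat y (tailSeq c)

/-- A prime word: a nonempty word which is not a proper power of a word. -/
def PrimeWord (c : List Bool) : Prop :=
  c ≠ [] ∧ ∀ (d : List Bool) (k : ℕ), 2 ≤ k → c ≠ (List.replicate k d).flatten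

/-- `conjH φ v = φ ∘ v ∘ φ⁻¹`. -/
def conjH (φ v : Cantor ≃ₜ Cantor) : Cantor ≃ₜ Cantor := φ.symm.trans (v.trans φ)

/-- `φ` normalizes Thompson's group `V` inside `Homeo(𝔠)` : `φ V φ⁻¹ = V`. -/
def NormalizesV (φ : Cantor ≃ₜ Cantor) : Prop :=
  (conjH φ) '' {v | memV v} = {v | memV v}

/-- The copy of the dyadic rationals `Q₂ ⊂ 𝔠` : finitely supported sequences. -/
def InQ2 (x : Cantor) : Prop := ∃ n : ℕ, ∀ m, n ≤ m → x m = false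

def zeroSeq : Cantor := fun _ => false

/-- A standard dyadic partition of the Cantor space. -/
def IsSDP (P : Finset (List Bool)) : Prop :=
  ∀ x : Cantor, ∃! w : List Bool, w ∈ P ∧ x ∈ cyl w

/-- Locally constant map: constant on each piece of some standard dyadic partition. -/
def IsLC {Γ : Type*} (f : Cantor → Γ) : Prop :=
  ∃ P : Finset (List Bool), IsSDP P ∧ ∀ w ∈ P, ∀ y z : Cantor, f (cat w y) = f (cat w z)

/-- `h` agrees on `Q₂` with (the restriction of) a locally constant map. -/
def AgreesOnQ2WithLC {Γ : Type*} (h : Cantor → Γ) : Prop :=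
  ∃ b : Cantor → Γ, IsLC b ∧ ∀ x, InQ2 x → h x = b x

section GroupPart
variable {Γ : Type*} [Group Γ]

/-- `alphaWord α₀ α₁ (m₁⋯m_k) = α_{m_k} ∘ ⋯ ∘ α_{m₁}`. -/
def alphaWord (α₀ α₁ : Γ ≃* Γ) (m : List Bool) : Γ ≃* Γ :=
  m.foldl (fun acc b => acc.trans (if b then α₁ else α₀)) (MulEquiv.refl Γ)

open Classical in
/-- The twisting automorphism `τ_{v,x} = α_{v(I)}⁻¹ ∘ α_I` for a standard dyadic
interval `I` containing `x` and adapted to `v`. -/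
noncomputable def tauEquiv (α₀ α₁ : Γ ≃* Γ) (v : Cantor ≃ₜ Cantor) (x : Cantor) : Γ ≃* Γ :=
  if h : ∃ p : List Bool × List Bool, x ∈ cyl p.1 ∧ ∀ z : Cantor, v (cat p.1 z) = cat p.2 z
  then (alphaWord α₀ α₁ h.choose.1).trans (alphaWord α₀ α₁ h.choose.2).symm
  else MulEquiv.refl Γ

/-- The element `a·v` of the twisted `LΓ ⋊ V`, realized as the permutation
`(x,g) ↦ (v x, a(v x) · τ_{v,x}(g))` of `𝔠 × Γ`. -/
noncomputable def permOf (α₀ α₁ : Γ ≃* Γ) (a : Cantor → Γ) (v : Cantor ≃ₜ Cantor) :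
    Equiv.Perm (Cantor × Γ) where
  toFun p := (v p.1, a (v p.1) * tauEquiv α₀ α₁ v p.1 p.2)
  invFun p := (v.symm p.1, (tauEquiv α₀ α₁ v (v.symm p.1)).symm ((a p.1)⁻¹ * p.2))
  left_inv := by rintro ⟨x, g⟩; simp
  right_inv := by rintro ⟨x, g⟩; simp

end GroupPart

/-- The twisted fraction group `G = LΓ ⋊ V` of the triple `(Γ, α₀, α₁)`,
as a group of permutations of `𝔠 × Γ`. -/
noncomputable def Gsub (Γ : Type*) [Group Γ] (α₀ α₁ : Γ ≃* Γ) :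
    Subgroup (Equiv.Perm (Cantor × Γ)) :=
  Subgroup.closure {p | ∃ a v, IsLC a ∧ memV v ∧ p = permOf α₀ α₁ a v}

/-- The untwisted case `α₀ = α₁ = id`. -/
noncomputable def permOfU {Γ : Type*} [Group Γ] (a : Cantor → Γ) (v : Cantor ≃ₜ Cantor) :=
  permOf (MulEquiv.refl Γ) (MulEquiv.refl Γ) a v

/-- The untwisted fraction group `G = LΓ ⋊ V`. -/
noncomputable def GsubU (Γ : Type*) [Group Γ] := Gsub Γ (MulEquiv.refl Γ) (MulEquiv.refl Γ)

/-- `f ∈ N_{K̄}(G)` : the element `f` of `K̄ = ∏_{Q₂}Γ` normalizes `G = LΓ ⋊ V`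
(untwisted case), i.e. `f·a·(f^v)⁻¹` and `f⁻¹·a·f^v` are locally constant on `Q₂`. -/
def InNormKbar {Γ : Type*} [Group Γ] (f : Cantor → Γ) : Prop :=
  ∀ (a : Cantor → Γ) (v : Cantor ≃ₜ Cantor), IsLC a → memV v →
    AgreesOnQ2WithLC (fun x => f x * a x * (f (v.symm x))⁻¹) ∧
    AgreesOnQ2WithLC (fun x => (f x)⁻¹ * a x * f (v.symm x))

namespace GammaAux

def shf (k : ℕ) (x : Cantor) : Cantor := fun n => x (n + k)

def listOf (x : Cantor) (k : ℕ) : List Bool := List.ofFn (fun i : Fin k => x i)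

def isPre (w : List Bool) (x : Cantor) : Prop := ∀ i, i < w.length → x i = w.getD i false

lemma cat_lt {w : List Bool} {y : Cantor} {i : ℕ} (h : i < w.length) :
    cat w y i = w.getD i false := by simp [cat, h]

lemma cat_ge {w : List Bool} {y : Cantor} {i : ℕ} (h : w.length ≤ i) :
    cat w y i = y (i - w.length) := by
  simp [cat, Nat.not_lt.mpr h]

lemma shf_cat (w : List Bool) (y : Cantor) : shf w.length (cat w y) = y := by
  funext n
  simp [shf, cat_ge (Nat.le_add_left _ _)]

lemma shf_shf (a b : ℕ) (x : Cantor) : shf a (shf b x) = shf (a + b) x := by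
  funext n; simp [shf, Nat.add_assoc]

lemma cat_append (u v : List Bool) (y : Cantor) : cat (u ++ v) y = cat u (cat v y) := by
  funext i
  by_cases h1 : i < u.length
  · rw [cat_lt (by simp; omega), cat_lt h1, List.getD_append _ _ _ _ h1]
  · push_neg at h1
    rw [cat_ge h1]
    by_cases h2 : i < u.length + v.length
    · rw [cat_lt (by simp; omega), cat_lt (by omega),
        List.getD_append_right _ _ _ _ h1]
    · push_neg at h2
      rw [cat_ge (by simp; omega), cat_ge (by omega)]
      simp only [List.length_append]
      congr 1; omega

lemma isPre_cat (w : List Bool) (y : Cantor) : isPre w (cat w y) :=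
  fun i hi => cat_lt hi

lemma cat_shf {w : List Bool} {x : Cantor} (h : isPre w x) :
    cat w (shf w.length x) = x := by
  funext i
  by_cases h1 : i < w.length
  · rw [cat_lt h1, h i h1]
  · push_neg at h1
    rw [cat_ge h1]; simp [shf]; congr 1; omega

lemma mem_cyl {w : List Bool} {x : Cantor} : x ∈ cyl w ↔ isPre w x := by
  constructor
  · rintro ⟨y, rfl⟩; exact isPre_cat w y
  · intro h; exact ⟨shf w.length x, (cat_shf h).symm⟩

@[simp] lemma listOf_length (x : Cantor) (k : ℕ) : (listOf x k).length = k := by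
  simp [listOf]

lemma listOf_getD {x : Cantor} {k i : ℕ} (h : i < k) :
    (listOf x k).getD i false = x i := by
  rw [List.getD_eq_getElem _ _ (by simpa using h)]
  simp [listOf]

lemma isPre_listOf (x : Cantor) (k : ℕ) : isPre (listOf x k) x := by
  intro i hi
  rw [listOf_getD (by simpa using hi)]

lemma cat_listOf (x : Cantor) (k : ℕ) : cat (listOf x k) (shf k x) = x := by
  have := cat_shf (isPre_listOf x k)
  simpa using this

lemma words_ext {w w' : List Bool} (hl : w.length = w'.length)
    (h : ∀ i, i < w.length → w.getD i false = w'.getD i false) : w = w' := by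
  apply List.ext_getElem hl
  intro i h1 h2
  have := h i h1
  rwa [List.getD_eq_getElem _ _ h1, List.getD_eq_getElem _ _ h2] at this

lemma words_eq_of_forall_cat {w w' : List Bool} (h : ∀ z : Cantor, cat w z = cat w' z) :
    w = w' := by
  have hl : w.length = w'.length := by
    by_contra hne
    rcases Nat.lt_or_ge w.length w'.length with hlt | hge
    · have h1 := congrFun (h (fun _ => !(w'.getD w.length false))) w.length
      rw [cat_ge (le_refl _), cat_lt hlt] at h1
      simp at h1
    · have hlt : w'.length < w.length := by omega
      have h1 := congrFun (h (fun _ => !(w.getD w'.length false))) w'.length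
      rw [cat_lt hlt, cat_ge (le_refl _)] at h1
      simp at h1
  apply words_ext hl
  intro i hi
  have h1 := congrFun (h zeroSeq) i
  rwa [cat_lt hi, cat_lt (hl ▸ hi)] at h1

/-- If `cat m y = cat m' y'` with `|m| ≤ |m'|`, then `m'` extends `m`. -/
lemma prefix_split {m m' : List Bool} {y y' : Cantor}
    (h : cat m y = cat m' y') (hl : m.length ≤ m'.length) :
    m' = m ++ listOf y (m'.length - m.length) ∧ y = cat (listOf y (m'.length - m.length)) y' := by
  have key : ∀ i, i < m'.length - m.length → y i = m'.getD (i + m.length) false := by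
    intro i hi
    have := congrFun h (i + m.length)
    rw [cat_ge (Nat.le_add_left _ _), cat_lt (by omega)] at this
    simpa using this
  constructor
  · apply words_ext (by simp; omega)
    intro i hi
    by_cases h1 : i < m.length
    · rw [List.getD_append _ _ _ _ h1]
      have := congrFun h i
      rw [cat_lt h1, cat_lt (by omega)] at this
      exact this.symm
    · push_neg at h1
      rw [List.getD_append_right _ _ _ _ h1, listOf_getD (by omega)]
      rw [key (i - m.length) (by omega)]
      congr 1; omega
  · funext i
    by_cases h1 : i < m'.length - m.length
    · rw [cat_lt (by simpa using h1), listOf_getD h1]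
    · push_neg at h1
      rw [cat_ge (by simpa using h1)]
      have := congrFun h (i + m.length)
      rw [cat_ge (Nat.le_add_left _ _), cat_ge (by omega)] at this
      simp only [listOf_length]
      rw [Nat.add_sub_cancel] at this
      rw [this]; congr 1; omega
      
end GammaAux
namespace GammaAux

lemma isOpen_cyl (w : List Bool) : IsOpen (cyl w) := by
  have h : cyl w = ⋂ i ∈ Finset.range w.length, {x : Cantor | x i = w.getD i false} := by
    ext x
    simp only [mem_cyl, isPre, Set.mem_iInter, Set.mem_setOf_eq, Finset.mem_range]
  rw [h]
  apply isOpen_biInter_finset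
  intro i _
  have h2 : {x : Cantor | x i = w.getD i false} = (fun x : Cantor => x i) ⁻¹' {w.getD i false} := rfl
  rw [h2]
  exact IsOpen.preimage (continuous_apply i) (isOpen_discrete _)

lemma listOf_add (x : Cantor) (a b : ℕ) :
    listOf x (a + b) = listOf x a ++ listOf (shf a x) b := by
  apply words_ext (by simp)
  intro i hi
  simp only [listOf_length] at hi
  by_cases h1 : i < a
  · rw [List.getD_append _ _ _ _ (by simpa using h1), listOf_getD hi, listOf_getD h1]
  · push_neg at h1
    rw [List.getD_append_right _ _ _ _ (by simpa using h1), listOf_getD hi]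
    simp only [listOf_length]
    rw [listOf_getD (by omega)]
    simp [shf]; congr 1; omega

lemma listOf_cat_mem {O : Set Cantor} {x : Cantor} {N K : ℕ} (hNK : N ≤ K)
    (h : ∀ z, cat (listOf x N) z ∈ O) : ∀ z, cat (listOf x K) z ∈ O := by
  intro z
  have : K = N + (K - N) := by omega
  rw [this, listOf_add, cat_append]
  exact h _

lemma open_nbhd_cyl {O : Set Cantor} (hO : IsOpen O) {x : Cantor} (hx : x ∈ O) :
    ∃ N : ℕ, ∀ z, cat (listOf x N) z ∈ O := by
  rcases isOpen_pi_iff.mp hO x hx with ⟨I, u, hu, hsub⟩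
  rcases I.bddAbove with ⟨N0, hN0⟩
  refine ⟨N0 + 1, fun z => hsub ?_⟩
  intro a ha
  have haN : a < N0 + 1 := by
    have := hN0 ha; omega
  have : cat (listOf x (N0 + 1)) z a = x a := by
    rw [cat_lt (by simpa using haN), listOf_getD haN]
  rw [this]
  exact (hu a ha).2

lemma continuous_cat (w : List Bool) : Continuous (cat w) := by
  apply continuous_pi
  intro i
  by_cases h : i < w.length
  · simpa [cat, h] using continuous_const
  · simpa [cat, h] using continuous_apply (i - w.length)

lemma locV_continuous {f : Cantor → Cantor}
    (h : ∀ x, ∃ m w : List Bool, isPre m x ∧ ∀ z, f (cat m z) = cat w z) :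
    Continuous f := by
  rw [continuous_iff_continuousAt]
  intro x
  rcases h x with ⟨m, w, hm, hf⟩
  have hg : ContinuousAt (fun y => cat w (shf m.length y)) x :=
    ((continuous_cat w).comp (continuous_pi fun n => continuous_apply (n + m.length))).continuousAt
  apply hg.congr
  apply Filter.eventuallyEq_of_mem ((isOpen_cyl m).mem_nhds (mem_cyl.mpr hm))
  rintro y ⟨z, rfl⟩
  simp only []
  rw [shf_cat, hf z]

end GammaAux
namespace GammaAux

lemma chart_ext {v : Cantor ≃ₜ Cantor} {m w : List Bool}
    (h : ∀ z, v (cat m z) = cat w z) (s : List Bool) :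
    ∀ z, v (cat (m ++ s) z) = cat (w ++ s) z := by
  intro z; rw [cat_append, cat_append]; exact h _

lemma hasLogSlope_unique {v : Cantor ≃ₜ Cantor} {x : Cantor} {k k' : ℤ}
    (h : HasLogSlope v x k) (h' : HasLogSlope v x k') : k = k' := by
  have aux : ∀ (m w m' w' : List Bool) (y y' : Cantor), cat m y = cat m' y' →
      (∀ z, v (cat m z) = cat w z) → (∀ z, v (cat m' z) = cat w' z) →
      m.length ≤ m'.length →
      (m.length : ℤ) - w.length = (m'.length : ℤ) - w'.length := by
    intro m w m' w' y y' he hm hm' hl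
    obtain ⟨hsplit, -⟩ := prefix_split he hl
    set s := listOf y (m'.length - m.length)
    have hw' : w ++ s = w' := by
      apply words_eq_of_forall_cat
      intro z
      rw [← chart_ext hm s z, ← hsplit, hm']
    have : s.length = m'.length - m.length := by simp [s]
    rw [← hw', hsplit]
    simp only [List.length_append]
    omega
  obtain ⟨m, w, y, hx, hm, rfl⟩ := h
  obtain ⟨m', w', y', hx', hm', rfl⟩ := h'
  rcases le_total m.length m'.length with hl | hl
  · exact aux m w m' w' y y' (hx ▸ hx') hm hm' hl
  · exact (aux m' w' m w y' y (hx' ▸ hx) hm' hm hl).symm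

lemma logSlope_eq {v : Cantor ≃ₜ Cantor} {x : Cantor} {k : ℤ}
    (h : HasLogSlope v x k) : logSlope v x = k := by
  have hex : ∃ k, HasLogSlope v x k := ⟨k, h⟩
  rw [logSlope, dif_pos hex]
  exact hasLogSlope_unique hex.choose_spec h

lemma memV_hasLogSlope {v : Cantor ≃ₜ Cantor} (hv : memV v) (x : Cantor) :
    HasLogSlope v x (logSlope v x) := by
  obtain ⟨m, w, y, hx, hm⟩ := hv x
  have h : HasLogSlope v x ((m.length : ℤ) - w.length) := ⟨m, w, y, hx, hm, rfl⟩
  rwa [logSlope_eq h]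

lemma hasLogSlope_comp {u v : Cantor ≃ₜ Cantor} {x : Cantor} {k k' : ℤ}
    (hu : HasLogSlope u x k) (hv : HasLogSlope v (u x) k') :
    HasLogSlope (u.trans v) x (k + k') := by
  obtain ⟨m, w, y, hx, hm, rfl⟩ := hu
  obtain ⟨m', w', y', hx', hm', rfl⟩ := hv
  have hux : u x = cat w y := by rw [hx, hm]
  rcases le_total w.length m'.length with hl | hl
  · obtain ⟨hsplit, hy⟩ := prefix_split (hux ▸ hx') hl
    set s := listOf y (m'.length - w.length) with hs
    have hslen : s.length = m'.length - w.length := by simp [hs]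
    refine ⟨m ++ s, w', y', ?_, ?_, ?_⟩
    · rw [cat_append, ← hy]; exact hx
    · intro z
      rw [Homeomorph.trans_apply, chart_ext hm s z, ← hsplit, hm']
    · simp only [List.length_append]; omega
  · obtain ⟨hsplit, hy'⟩ := prefix_split (hx' ▸ hux) hl
    set s := listOf y' (w.length - m'.length) with hs
    have hslen : s.length = w.length - m'.length := by simp [hs]
    refine ⟨m, w' ++ s, y, hx, ?_, ?_⟩
    · intro z
      rw [Homeomorph.trans_apply, hm, hsplit, cat_append, hm', ← cat_append]
    · simp only [List.length_append]; omega

lemma memV_trans {u v : Cantor ≃ₜ Cantor} (hu : memV u) (hv : memV v) :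
    memV (u.trans v) := by
  intro x
  obtain ⟨m, w, y, hx, hm, -⟩ := hasLogSlope_comp (memV_hasLogSlope hu x) (memV_hasLogSlope hv (u x))
  exact ⟨m, w, y, hx, hm⟩

lemma logSlope_trans {u v : Cantor ≃ₜ Cantor} (hu : memV u) (hv : memV v) (x : Cantor) :
    logSlope (u.trans v) x = logSlope u x + logSlope v (u x) :=
  logSlope_eq (hasLogSlope_comp (memV_hasLogSlope hu x) (memV_hasLogSlope hv (u x)))

lemma hasLogSlope_symm {v : Cantor ≃ₜ Cantor} {x : Cantor} {k : ℤ}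
    (h : HasLogSlope v x k) : HasLogSlope v.symm (v x) (-k) := by
  obtain ⟨m, w, y, hx, hm, rfl⟩ := h
  refine ⟨w, m, y, ?_, ?_, by ring⟩
  · rw [hx, hm]
  · intro z
    have := hm z
    rw [← this, Homeomorph.symm_apply_apply]

lemma memV_symm {v : Cantor ≃ₜ Cantor} (hv : memV v) : memV v.symm := by
  intro x
  obtain ⟨m, w, y, hx, hm, -⟩ := hasLogSlope_symm (memV_hasLogSlope hv (v.symm x))
  rw [Homeomorph.apply_symm_apply] at hx
  exact ⟨m, w, y, hx, hm⟩

lemma logSlope_symm {v : Cantor ≃ₜ Cantor} (hv : memV v) (x : Cantor) :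
    logSlope v.symm (v x) = - logSlope v x :=
  logSlope_eq (hasLogSlope_symm (memV_hasLogSlope hv x))

lemma cat_nil (z : Cantor) : cat [] z = z := by
  funext i; rw [cat_ge (by simp)]; simp

lemma memV_refl : memV (Homeomorph.refl Cantor) := by
  intro x
  exact ⟨[], [], x, (cat_nil x).symm, fun z => by simp [cat_nil]⟩

lemma logSlope_refl (x : Cantor) : logSlope (Homeomorph.refl Cantor) x = 0 :=
  logSlope_eq ⟨[], [], x, (cat_nil x).symm, fun z => by simp [cat_nil], by simp⟩

/-- slope 0 whenever the map is the identity on an open set containing the point. -/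
lemma logSlope_eq_zero_of_locId {v : Cantor ≃ₜ Cantor} {O : Set Cantor} {x : Cantor}
    (hO : IsOpen O) (hx : x ∈ O) (hid : ∀ y ∈ O, v y = y) : logSlope v x = 0 := by
  obtain ⟨N, hN⟩ := open_nbhd_cyl hO hx
  refine logSlope_eq ⟨listOf x N, listOf x N, shf N x, ?_, ?_, by simp⟩
  · rw [cat_listOf]
  · intro z
    exact hid _ (hN z)

end GammaAux
namespace GammaAux

lemma conjH_apply (ψ v : Cantor ≃ₜ Cantor) (x : Cantor) :
    conjH ψ v x = ψ (v (ψ.symm x)) := rfl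

lemma conjH_trans (ψ u v : Cantor ≃ₜ Cantor) :
    conjH ψ (u.trans v) = (conjH ψ u).trans (conjH ψ v) := by
  ext x
  simp [conjH_apply, Homeomorph.trans_apply]

lemma conjH_refl (ψ : Cantor ≃ₜ Cantor) :
    conjH ψ (Homeomorph.refl Cantor) = Homeomorph.refl Cantor := by
  ext x; simp [conjH_apply]

lemma conjH_symmv (ψ v : Cantor ≃ₜ Cantor) :
    conjH ψ v.symm = (conjH ψ v).symm := by
  apply Homeomorph.ext
  intro x
  apply (conjH ψ v).injective
  rw [Homeomorph.apply_symm_apply]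
  simp [conjH_apply]

lemma conjH_conjH (ψ v : Cantor ≃ₜ Cantor) :
    conjH ψ.symm (conjH ψ v) = v := by
  ext x; simp [conjH_apply]

lemma memV_conjH {φ : Cantor ≃ₜ Cantor} (hφ : NormalizesV φ)
    {v : Cantor ≃ₜ Cantor} (hv : memV v) : memV (conjH φ v) := by
  have : conjH φ v ∈ (conjH φ) '' {v | memV v} := ⟨v, hv, rfl⟩
  rw [hφ] at this
  exact this

lemma memV_conjH_symm {φ : Cantor ≃ₜ Cantor} (hφ : NormalizesV φ)
    {v : Cantor ≃ₜ Cantor} (hv : memV v) : memV (conjH φ.symm v) := by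
  have hv' : v ∈ {v : Cantor ≃ₜ Cantor | memV v} := hv
  rw [← hφ] at hv'
  obtain ⟨u, hu, rfl⟩ := hv'
  rw [conjH_conjH]
  exact hu

lemma germ_id {w : Cantor ≃ₜ Cantor} {x : Cantor} (hw : memV w)
    (hfix : w x = x) (h0 : logSlope w x = 0) :
    ∃ M : List Bool, isPre M x ∧ ∀ z, w (cat M z) = cat M z := by
  obtain ⟨m, w', y, hx, hm, hlen⟩ := memV_hasLogSlope hw x
  rw [h0] at hlen
  have hlen' : m.length = w'.length := by omega
  have hx' : x = cat w' y := by rw [hx, ← hm y, ← hx, hfix]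
  have hmw : m = w' := by
    apply words_ext hlen'
    intro i hi
    have h1 := congrFun hx i
    have h2 := congrFun hx' i
    rw [cat_lt hi] at h1
    rw [cat_lt (hlen' ▸ hi)] at h2
    rw [← h1, ← h2]
  refine ⟨m, ?_, ?_⟩
  · rw [hx]; exact isPre_cat m y
  · intro z; rw [hm, hmw]

lemma slope_transfer_zero {ψ w wbar : Cantor ≃ₜ Cantor} {x : Cantor}
    (hpt : ∀ y, wbar y = ψ.symm (w (ψ y)))
    (hw : memV w) (hfix : w x = x) (h0 : logSlope w x = 0) :
    logSlope wbar (ψ.symm x) = 0 := by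
  obtain ⟨M, hM, hid⟩ := germ_id hw hfix h0
  apply logSlope_eq_zero_of_locId (O := ψ ⁻¹' (cyl M))
    (IsOpen.preimage ψ.continuous (isOpen_cyl M))
  · simp only [Set.mem_preimage, Homeomorph.apply_symm_apply]
    exact mem_cyl.mpr hM
  · rintro y hy
    obtain ⟨z, hz⟩ := hy
    rw [hpt y, hz, hid z, ← hz, Homeomorph.symm_apply_apply]

end GammaAux
namespace GammaAux

lemma per_gcd : ∀ (s a b N : ℕ), a + b ≤ s → 0 < a → 0 < b → ∀ (f : ℕ → Bool),
    (∀ n, N ≤ n → f (n + a) = f n) → (∀ n, N ≤ n → f (n + b) = f n) →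
    ∀ n, N ≤ n → f (n + Nat.gcd a b) = f n := by
  intro s
  induction s with
  | zero => intro a b N hs ha; omega
  | succ s ih =>
    intro a b N hs ha hb f hfa hfb n hn
    rcases Nat.lt_trichotomy a b with h | h | h
    · have hba : ∀ n, N ≤ n → f (n + (b - a)) = f n := by
        intro n hn
        have h1 := hfa (n + (b - a)) (by omega)
        rw [show n + (b - a) + a = n + b by omega] at h1
        rw [← hfb n hn, ← h1]
      have hg : Nat.gcd a b = Nat.gcd a (b - a) := (Nat.gcd_sub_self_right (le_of_lt h)).symm
      rw [hg]
      exact ih a (b - a) N (by omega) ha (by omega) f hfa hba n hn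
    · subst h
      rw [Nat.gcd_self]
      exact hfa n hn
    · have hab : ∀ n, N ≤ n → f (n + (a - b)) = f n := by
        intro n hn
        have h1 := hfb (n + (a - b)) (by omega)
        rw [show n + (a - b) + b = n + a by omega] at h1
        rw [← hfa n hn, ← h1]
      have hg : Nat.gcd a b = Nat.gcd (a - b) b := (Nat.gcd_sub_self_left (le_of_lt h)).symm
      rw [hg]
      exact ih (a - b) b N (by omega) (by omega) hb f hab hfb n hn

lemma tailSeq_small {c : List Bool} {i : ℕ} (h : i < c.length) :
    tailSeq c i = c.getD i false := by
  simp [tailSeq, Nat.mod_eq_of_lt h]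

lemma tailSeq_q (c : List Bool) (k : ℕ) : tailSeq c (k + c.length) = tailSeq c k := by
  simp [tailSeq, Nat.add_mod_right]

lemma tailSeq_mul_q (c : List Bool) (k M : ℕ) : tailSeq c (k + M * c.length) = tailSeq c k := by
  induction M with
  | zero => simp
  | succ M ih =>
    rw [show k + (M+1) * c.length = (k + M * c.length) + c.length by ring, tailSeq_q, ih]

lemma cat_tailSeq (c : List Bool) : cat c (tailSeq c) = tailSeq c := by
  funext i
  by_cases h : i < c.length
  · rw [cat_lt h, tailSeq_small h]
  · push_neg at h
    rw [cat_ge h]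
    have := tailSeq_q c (i - c.length)
    rw [show i - c.length + c.length = i by omega] at this
    exact this.symm

lemma flat_rep_len (k : ℕ) (d : List Bool) :
    (List.replicate k d).flatten.length = k * d.length := by
  induction k with
  | zero => simp
  | succ k ih => simp [List.replicate_succ, ih]; ring

lemma flat_rep_getD : ∀ (k : ℕ) (d : List Bool) (i : ℕ), i < k * d.length →
    ((List.replicate k d).flatten).getD i false = d.getD (i % d.length) false := by
  intro k
  induction k with
  | zero => intro d i h; omega
  | succ k ih =>
    intro d i h
    have hsucc : (k+1) * d.length = k * d.length + d.length := by ring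
    have hd : 0 < d.length := by
      rcases Nat.eq_zero_or_pos d.length with h0 | h0
      · rw [h0, Nat.mul_zero] at h; omega
      · exact h0
    rw [hsucc] at h
    rw [List.replicate_succ, List.flatten_cons]
    by_cases h1 : i < d.length
    · rw [List.getD_append _ _ _ _ h1, Nat.mod_eq_of_lt h1]
    · push_neg at h1
      rw [List.getD_append_right _ _ _ _ h1, ih d (i - d.length) (by omega)]
      congr 1
      have h3 : i = (i - d.length) + d.length := by omega
      conv_rhs => rw [h3]
      rw [Nat.add_mod_right]

lemma prime_period {c : List Bool} (hc : PrimeWord c) {g : ℕ} (hg : 0 < g)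
    (hdvd : g ∣ c.length) (hper : ∀ k, tailSeq c (k + g) = tailSeq c k) :
    g = c.length := by
  have hq : 0 < c.length := List.length_pos_iff.mpr hc.1
  by_contra hne
  have hlt : g < c.length := Nat.lt_of_le_of_ne (Nat.le_of_dvd hq hdvd) hne
  obtain ⟨k, hk⟩ := hdvd
  have hk2 : 2 ≤ k := by
    by_contra hklt
    push_neg at hklt
    have hk1 : k ≤ 1 := by omega
    have hle : g * k ≤ g * 1 := Nat.mul_le_mul_left g hk1
    rw [Nat.mul_one] at hle
    rw [← hk] at hle
    omega
  apply hc.2 (c.take g) k hk2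
  have htail_mod : ∀ i, tailSeq c i = tailSeq c (i % g) := by
    intro i
    conv_lhs => rw [show i = i % g + (i / g) * g by rw [Nat.mod_add_div']]
    generalize (i / g) = M
    induction M with
    | zero => simp
    | succ M ihM => rw [show i % g + (M+1) * g = (i % g + M * g) + g by ring, hper, ihM]
  apply List.ext_getElem
  · rw [flat_rep_len]
    simp only [List.length_take, Nat.min_eq_left (le_of_lt hlt)]
    rw [hk, Nat.mul_comm]
  · intro i h1 h2
    rw [← List.getD_eq_getElem _ false h1, ← List.getD_eq_getElem _ false h2]
    rw [flat_rep_getD k (c.take g) i (by simpa [Nat.min_eq_left (le_of_lt hlt)] using h2)]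
    have hmin : (c.take g).length = g := by simp [Nat.min_eq_left (le_of_lt hlt)]
    rw [hmin]
    have him : i % g < g := Nat.mod_lt _ hg
    have htake : (c.take g).getD (i % g) false = c.getD (i % g) false := by
      rw [List.getD_eq_getElem _ false (by rw [hmin]; exact him),
        List.getD_eq_getElem _ false (by omega)]
      simp
    rw [htake]
    have e1 : c.getD i false = tailSeq c i := (tailSeq_small h1).symm
    have e2 : c.getD (i % g) false = tailSeq c (i % g) := (tailSeq_small (by omega)).symm
    rw [e1, e2, htail_mod i]

lemma fixpoint_slope_dvd {w : Cantor ≃ₜ Cantor} {x : Cantor} {y₀ c : List Bool}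
    (hc : PrimeWord c) (hx : x = cat y₀ (tailSeq c)) (hw : memV w) (hfix : w x = x) :
    (c.length : ℤ) ∣ logSlope w x := by
  set q := c.length with hq
  have hq0 : 0 < q := List.length_pos_iff.mpr hc.1
  obtain ⟨m, w', y, hxm, hm, hlen⟩ := memV_hasLogSlope hw x
  have hxw' : x = cat w' y := by rw [hxm, ← hm y, ← hxm, hfix]
  -- period relation from the two prefixes
  have hper0 : ∀ n, x (n + m.length) = x (n + w'.length) := by
    intro n
    have h1 := congrFun hxm (n + m.length)
    have h2 := congrFun hxw' (n + w'.length)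
    rw [cat_ge (by omega)] at h1
    rw [cat_ge (by omega)] at h2
    simp only [Nat.add_sub_cancel] at h1 h2
    rw [h1, h2]
  -- q-periodicity beyond |y₀|
  have hperq : ∀ n, y₀.length ≤ n → x (n + q) = x n := by
    intro n hn
    have h1 := congrFun hx (n + q)
    have h2 := congrFun hx n
    rw [cat_ge (by omega)] at h1
    rw [cat_ge (by omega)] at h2
    rw [h1, h2, show n + q - y₀.length = (n - y₀.length) + q by omega, tailSeq_q]
  by_cases heq : m.length = w'.length
  · rw [hlen, heq]
    simp
  · -- e-periodicity
    set e := max m.length w'.length - min m.length w'.length with he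
    have he0 : 0 < e := by omega
    set N := m.length + w'.length + y₀.length with hN
    have hpere : ∀ n, N ≤ n → x (n + e) = x n := by
      intro n hn
      rcases Nat.lt_or_ge m.length w'.length with h | h
      · have := hper0 (n - m.length)
        rw [show n - m.length + m.length = n by omega,
            show n - m.length + w'.length = n + e by omega] at this
        exact this.symm
      · have := hper0 (n - w'.length)
        rw [show n - w'.length + w'.length = n by omega,
            show n - w'.length + m.length = n + e by omega] at this
        exact this
    have hgcd := per_gcd (e + q) e q N (le_refl _) he0 hq0 x hpere
      (fun n hn => hperq n (by omega))
    set g := Nat.gcd e q with hgdef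
    have hg0 : 0 < g := Nat.gcd_pos_of_pos_left _ he0
    -- transfer to tailSeq everywhere
    have htper : ∀ k, tailSeq c (k + g) = tailSeq c k := by
      intro k
      have h1 : tailSeq c (k + g) = tailSeq c (k + g + N * q) := (tailSeq_mul_q c _ N).symm
      have h2 : tailSeq c k = tailSeq c (k + N * q) := (tailSeq_mul_q c _ N).symm
      rw [h1, h2]
      have e1 : tailSeq c (k + g + N * q) = x (k + g + N * q + y₀.length) := by
        have := congrFun hx (k + g + N * q + y₀.length)
        rw [cat_ge (by omega)] at this
        rw [this]; congr 1; omega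
      have e2 : tailSeq c (k + N * q) = x (k + N * q + y₀.length) := by
        have := congrFun hx (k + N * q + y₀.length)
        rw [cat_ge (by omega)] at this
        rw [this]; congr 1; omega
      rw [e1, e2]
      have := hgcd (k + N * q + y₀.length) (by
        have : N ≤ N * q := Nat.le_mul_of_pos_right N hq0
        omega)
      rw [show k + N * q + y₀.length + g = k + g + N * q + y₀.length by ring] at this
      exact this
    have hgq : g = q := prime_period hc hg0 (Nat.gcd_dvd_right e q) htper
    have hqe : q ∣ e := hgq ▸ Nat.gcd_dvd_left e q
    obtain ⟨t, ht⟩ := hqe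
    rw [hlen]
    rcases Nat.lt_or_ge m.length w'.length with h | h
    · refine ⟨-(t : ℤ), ?_⟩
      have : e = w'.length - m.length := by omega
      have : w'.length = m.length + q * t := by omega
      rw [this]; push_cast; ring
    · refine ⟨(t : ℤ), ?_⟩
      have : e = m.length - w'.length := by omega
      have : m.length = w'.length + q * t := by omega
      rw [this]; push_cast; ring

end GammaAux
namespace GammaAux

lemma isPre_prefix {u s : List Bool} {x : Cantor} (h : isPre (u ++ s) x) : isPre u x := by
  intro i hi
  rw [h i (by simp; omega), List.getD_append _ _ _ _ hi]

lemma isPre_same_length {a b : List Bool} {x : Cantor} (ha : isPre a x) (hb : isPre b x)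
    (hl : a.length = b.length) : a = b := by
  apply words_ext hl
  intro i hi
  rw [← ha i hi, ← hb i (hl ▸ hi)]

lemma isPre_cat_append (w r : List Bool) (z : Cantor) : isPre w (cat (w ++ r) z) := by
  rw [cat_append]; exact isPre_cat _ _

lemma shf_cat_append (w r : List Bool) (z : Cantor) :
    shf w.length (cat (w ++ r) z) = cat r z := by
  rw [cat_append, shf_cat]

lemma isPre_cat_iff {m w : List Bool} {z : Cantor} (hl : m.length = w.length) :
    isPre w (cat m z) ↔ m = w := by
  constructor
  · intro h
    exact isPre_same_length (isPre_cat m z) h hl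
  · rintro rfl
    exact isPre_cat _ _

lemma getD_replicate_false (k j : ℕ) : (List.replicate k false).getD j false = false := by
  by_cases h : j < k
  · rw [List.getD_eq_getElem _ false (by simpa using h)]
    simp
  · rw [List.getD_eq_default _ false (by simpa using h)]

lemma getD_take' {c : List Bool} {g j : ℕ} (hj : j < g) (hg : g ≤ c.length) :
    (c.take g).getD j false = c.getD j false := by
  rw [List.getD_eq_getElem _ false (by simp; omega), List.getD_eq_getElem _ false (by omega)]
  simp

open Classical in
noncomputable def flipFun (w : List Bool) : Cantor → Cantor := fun x =>
  if isPre w x then (fun k => if k = w.length then !(x k) else x k) else x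

lemma flipFun_invol (w : List Bool) (x : Cantor) : flipFun w (flipFun w x) = x := by
  by_cases h : isPre w x
  · have h1 : flipFun w x = fun k => if k = w.length then !(x k) else x k := if_pos h
    have h2 : isPre w (flipFun w x) := by
      intro i hi
      rw [h1]
      simp only [if_neg (by omega : ¬ i = w.length)]
      exact h i hi
    rw [flipFun, if_pos h2, h1]
    funext k
    by_cases hk : k = w.length <;> simp [hk]
  · have hx : flipFun w x = x := if_neg h
    rw [hx, hx]

lemma flipFun_charts (w : List Bool) :
    ∀ x, ∃ m w' : List Bool, isPre m x ∧ ∀ z, flipFun w (cat m z) = cat w' z := by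
  intro x
  by_cases h : isPre w x
  · refine ⟨w ++ [x w.length], w ++ [!(x w.length)], ?_, ?_⟩
    · intro i hi
      simp only [List.length_append, List.length_cons, List.length_nil] at hi
      by_cases h1 : i < w.length
      · rw [List.getD_append _ _ _ _ h1]; exact h i h1
      · have : i = w.length := by omega
        subst this
        rw [List.getD_append_right _ _ _ _ (le_refl _)]
        simp
    · intro z
      have hp : isPre w (cat (w ++ [x w.length]) z) := isPre_cat_append _ _ _
      rw [flipFun, if_pos hp]
      funext k
      rcases Nat.lt_trichotomy k w.length with hk | hk | hk
      · simp only [if_neg (by omega : ¬ k = w.length)]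
        rw [cat_lt (by simp; omega), cat_lt (by simp; omega),
          List.getD_append _ _ _ _ hk, List.getD_append _ _ _ _ hk]
      · subst hk
        simp only [if_pos rfl]
        rw [cat_lt (by simp), cat_lt (by simp),
          List.getD_append_right _ _ _ _ (le_refl _),
          List.getD_append_right _ _ _ _ (le_refl _)]
        simp
      · simp only [if_neg (by omega : ¬ k = w.length)]
        rw [cat_ge (by simp; omega), cat_ge (by simp; omega)]
        simp
  · simp only [isPre] at h
    push_neg at h
    obtain ⟨i, hi, hne⟩ := h
    refine ⟨listOf x w.length, listOf x w.length, isPre_listOf _ _, ?_⟩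
    intro z
    have hnp : ¬ isPre w (cat (listOf x w.length) z) := by
      intro hp
      apply hne
      rw [← hp i hi, cat_lt (by simpa using hi), listOf_getD hi]
    rw [flipFun, if_neg hnp]

open Classical in
noncomputable def flipAt (w : List Bool) : Cantor ≃ₜ Cantor :=
  Homeomorph.mk ⟨flipFun w, flipFun w, flipFun_invol w, flipFun_invol w⟩
    (locV_continuous (fun x => by
      obtain ⟨m, w', hm, hc⟩ := flipFun_charts w x
      exact ⟨m, w', hm, hc⟩))
    (locV_continuous (fun x => by
      obtain ⟨m, w', hm, hc⟩ := flipFun_charts w x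
      exact ⟨m, w', hm, hc⟩))

lemma memV_flipAt (w : List Bool) : memV (flipAt w) := by
  intro x
  obtain ⟨m, w', hm, hc⟩ := flipFun_charts w x
  exact ⟨m, w', shf m.length x, (cat_shf hm).symm, hc⟩

lemma flipAt_apply (w : List Bool) (x : Cantor) : flipAt w x = flipFun w x := rfl

end GammaAux
namespace GammaAux

open Classical in
noncomputable def ctrFun (y₀ x₀ c : List Bool) : Cantor → Cantor := fun x =>
  if isPre y₀ x then cat (y₀ ++ c) (shf y₀.length x)
  else if isPre x₀ x then
    (if h : ∃ i, i < c.length ∧ shf x₀.length x i = true then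
       cat (y₀ ++ c.take (Nat.find h) ++ [!(c.getD (Nat.find h) false)])
           (shf (Nat.find h + 1) (shf x₀.length x))
     else cat x₀ (shf c.length (shf x₀.length x)))
  else x

open Classical in
noncomputable def expFun (y₀ x₀ c : List Bool) : Cantor → Cantor := fun x =>
  if isPre (y₀ ++ c) x then cat y₀ (shf (y₀ ++ c).length x)
  else if isPre y₀ x then
    (if h : ∃ i, i < c.length ∧ shf y₀.length x i ≠ c.getD i false then
       cat (x₀ ++ List.replicate (Nat.find h) false ++ [true])
           (shf (Nat.find h + 1) (shf y₀.length x))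
     else x)
  else if isPre x₀ x then cat (x₀ ++ List.replicate c.length false) (shf x₀.length x)
  else x

variable {y₀ x₀ c : List Bool}

lemma shf_cat_len {w : List Bool} (z : Cantor) {k : ℕ} (h : w.length = k) :
    shf k (cat w z) = z := by subst h; exact shf_cat w z

section CtrLemmas
variable (hlen : x₀.length = y₀.length) (hne : x₀ ≠ y₀)

lemma ctr_chart_y : ∀ z, ctrFun y₀ x₀ c (cat y₀ z) = cat (y₀ ++ c) z := by
  intro z
  rw [ctrFun, if_pos (isPre_cat y₀ z), shf_cat]

include hlen hne in
lemma ctr_chart_i {i : ℕ} (hi : i < c.length) :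
    ∀ z, ctrFun y₀ x₀ c (cat (x₀ ++ List.replicate i false ++ [true]) z) =
      cat (y₀ ++ c.take i ++ [!(c.getD i false)]) z := by
  intro z
  have hassoc : x₀ ++ List.replicate i false ++ [true] =
      x₀ ++ (List.replicate i false ++ [true]) := by rw [List.append_assoc]
  rw [hassoc]
  have hx0 : isPre x₀ (cat (x₀ ++ (List.replicate i false ++ [true])) z) :=
    isPre_cat_append _ _ _
  have hy0 : ¬ isPre y₀ (cat (x₀ ++ (List.replicate i false ++ [true])) z) := by
    intro hp
    exact hne (isPre_same_length hx0 hp hlen)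
  have hshf : shf x₀.length (cat (x₀ ++ (List.replicate i false ++ [true])) z) =
      cat (List.replicate i false ++ [true]) z := shf_cat_append _ _ _
  rw [ctrFun, if_neg hy0, if_pos hx0, hshf]
  have hti : cat (List.replicate i false ++ [true]) z i = true := by
    rw [cat_lt (by simp), List.getD_append_right _ _ _ _ (by simp)]
    simp
  have htj : ∀ j, j < i → cat (List.replicate i false ++ [true]) z j = false := by
    intro j hj
    rw [cat_lt (by simp; omega), List.getD_append _ _ _ _ (by simpa using hj),
      getD_replicate_false]
  have hex : ∃ j, j < c.length ∧ cat (List.replicate i false ++ [true]) z j = true :=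
    ⟨i, hi, hti⟩
  rw [dif_pos hex]
  have hfind : Nat.find hex = i := by
    rw [Nat.find_eq_iff]
    exact ⟨⟨hi, hti⟩, fun j hj hPj => by rw [htj j hj] at hPj; exact Bool.false_ne_true hPj.2⟩
  rw [hfind, shf_cat_len z (by simp)]

include hne hlen in
lemma ctr_chart_zero :
    ∀ z, ctrFun y₀ x₀ c (cat (x₀ ++ List.replicate c.length false) z) = cat x₀ z := by
  intro z
  have hx0 : isPre x₀ (cat (x₀ ++ List.replicate c.length false) z) := isPre_cat_append _ _ _
  have hy0 : ¬ isPre y₀ (cat (x₀ ++ List.replicate c.length false) z) := by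
    intro hp
    exact hne (isPre_same_length hx0 hp hlen)
  have hshf : shf x₀.length (cat (x₀ ++ List.replicate c.length false) z) =
      cat (List.replicate c.length false) z := shf_cat_append _ _ _
  rw [ctrFun, if_neg hy0, if_pos hx0, hshf]
  have hnex : ¬ ∃ j, j < c.length ∧ cat (List.replicate c.length false) z j = true := by
    rintro ⟨j, hj, htrue⟩
    rw [cat_lt (by simpa using hj), getD_replicate_false] at htrue
    exact Bool.false_ne_true htrue
  rw [dif_neg hnex, shf_cat_len z (by simp)]

include hlen in
lemma ctr_chart_other {m : List Bool} (hm : m.length = y₀.length)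
    (h1 : m ≠ y₀) (h2 : m ≠ x₀) :
    ∀ z, ctrFun y₀ x₀ c (cat m z) = cat m z := by
  intro z
  rw [ctrFun, if_neg (fun hp => h1 ((isPre_cat_iff hm).mp hp)),
    if_neg (fun hp => h2 ((isPre_cat_iff (by omega)).mp hp))]

lemma exp_chart_y : ∀ z, expFun y₀ x₀ c (cat (y₀ ++ c) z) = cat y₀ z := by
  intro z
  rw [expFun, if_pos (isPre_cat _ z), shf_cat]

include hlen hne in
lemma exp_chart_i {i : ℕ} (hi : i < c.length) :
    ∀ z, expFun y₀ x₀ c (cat (y₀ ++ c.take i ++ [!(c.getD i false)]) z) =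
      cat (x₀ ++ List.replicate i false ++ [true]) z := by
  intro z
  have hassoc : y₀ ++ c.take i ++ [!(c.getD i false)] =
      y₀ ++ (c.take i ++ [!(c.getD i false)]) := by rw [List.append_assoc]
  rw [hassoc]
  set X := cat (y₀ ++ (c.take i ++ [!(c.getD i false)])) z with hX
  have hy0 : isPre y₀ X := isPre_cat_append _ _ _
  have hshf : shf y₀.length X = cat (c.take i ++ [!(c.getD i false)]) z :=
    shf_cat_append _ _ _
  have htakelen : (c.take i).length = i := by simp; omega
  have hti : shf y₀.length X i ≠ c.getD i false := by
    rw [hshf, cat_lt (by simp [htakelen]), List.getD_append_right _ _ _ _ (by omega)]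
    simp [htakelen]
  have htj : ∀ j, j < i → shf y₀.length X j = c.getD j false := by
    intro j hj
    rw [hshf, cat_lt (by simp [htakelen]; omega), List.getD_append _ _ _ _ (by omega),
      getD_take' hj (by omega)]
  have hyc : ¬ isPre (y₀ ++ c) X := by
    intro hp
    apply hti
    have := hp (y₀.length + i) (by simp; omega)
    rw [List.getD_append_right _ _ _ _ (by omega)] at this
    simp only [Nat.add_sub_cancel_left] at this
    rw [shf]
    rw [Nat.add_comm] at this
    exact this
  rw [expFun, if_neg hyc, if_pos hy0]
  have hex : ∃ j, j < c.length ∧ shf y₀.length X j ≠ c.getD j false := ⟨i, hi, hti⟩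
  rw [dif_pos hex]
  have hfind : Nat.find hex = i := by
    rw [Nat.find_eq_iff]
    exact ⟨⟨hi, hti⟩, fun j hj hPj => hPj.2 (htj j hj)⟩
  rw [hfind, hshf, shf_cat_len z (by simp [htakelen])]

include hlen hne in
lemma exp_chart_x :
    ∀ z, expFun y₀ x₀ c (cat x₀ z) = cat (x₀ ++ List.replicate c.length false) z := by
  intro z
  have hx0 : isPre x₀ (cat x₀ z) := isPre_cat _ _
  have hy0 : ¬ isPre y₀ (cat x₀ z) := by
    intro hp
    exact hne (isPre_same_length hx0 hp hlen)
  have hyc : ¬ isPre (y₀ ++ c) (cat x₀ z) := fun hp => hy0 (isPre_prefix hp)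
  rw [expFun, if_neg hyc, if_neg hy0, if_pos hx0, shf_cat]

include hlen in
lemma exp_chart_other {m : List Bool} (hm : m.length = y₀.length)
    (h1 : m ≠ y₀) (h2 : m ≠ x₀) :
    ∀ z, expFun y₀ x₀ c (cat m z) = cat m z := by
  intro z
  have hy0 : ¬ isPre y₀ (cat m z) := fun hp => h1 ((isPre_cat_iff hm).mp hp)
  rw [expFun, if_neg (fun hp => hy0 (isPre_prefix hp)), if_neg hy0,
    if_neg (fun hp => h2 ((isPre_cat_iff (by omega)).mp hp))]

include hlen in
lemma ctr_cases (x : Cantor) :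
    (∃ z, x = cat y₀ z) ∨
    (∃ i, i < c.length ∧ ∃ z, x = cat (x₀ ++ List.replicate i false ++ [true]) z) ∨
    (∃ z, x = cat (x₀ ++ List.replicate c.length false) z) ∨
    (∃ m, m.length = y₀.length ∧ m ≠ y₀ ∧ m ≠ x₀ ∧ ∃ z, x = cat m z) := by
  by_cases hy : isPre y₀ x
  · exact Or.inl ⟨shf y₀.length x, (cat_shf hy).symm⟩
  · by_cases hx0 : isPre x₀ x
    · set t := shf x₀.length x with ht
      have hxt : x = cat x₀ t := (cat_shf hx0).symm
      by_cases hex : ∃ i, i < c.length ∧ t i = true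
      · right; left
        classical
        obtain ⟨i, hiq, hit, hmin⟩ :
            ∃ i, i < c.length ∧ t i = true ∧ ∀ j, j < i → ¬(j < c.length ∧ t j = true) :=
          ⟨Nat.find hex, (Nat.find_spec hex).1, (Nat.find_spec hex).2,
            fun j hj => Nat.find_min hex hj⟩
        refine ⟨i, hiq, shf (i+1) t, ?_⟩
        have hlist : listOf t (i+1) = List.replicate i false ++ [true] := by
          apply words_ext (by simp)
          intro j hj
          simp only [listOf_length] at hj
          rw [listOf_getD hj]
          by_cases hji : j < i
          · rw [List.getD_append _ _ _ _ (by simpa using hji), getD_replicate_false]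
            have hnot := hmin j hji
            push_neg at hnot
            have := hnot (by omega)
            simpa using this
          · have hji' : j = i := by omega
            subst hji'
            rw [List.getD_append_right _ _ _ _ (by simp)]
            simpa using hit
        rw [hxt, List.append_assoc, ← hlist, cat_append]
        rw [cat_listOf t (i+1)]
      · right; right; left
        push_neg at hex
        refine ⟨shf c.length t, ?_⟩
        have hpre : isPre (List.replicate c.length false) t := by
          intro j hj
          simp only [List.length_replicate] at hj
          rw [getD_replicate_false]
          simpa using hex j hj
        have h2 : cat (List.replicate c.length false) (shf c.length t) = t := by
          have := cat_shf hpre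
          simpa using this
        rw [hxt, cat_append, h2]
    · right; right; right
      refine ⟨listOf x y₀.length, by simp, ?_, ?_, shf y₀.length x, (cat_listOf x _).symm⟩
      · intro hm
        exact hy (hm ▸ isPre_listOf x y₀.length)
      · intro hm
        apply hx0
        have : isPre (listOf x y₀.length) x := isPre_listOf _ _
        rwa [hm] at this

include hlen in
lemma exp_cases (x : Cantor) :
    (∃ z, x = cat (y₀ ++ c) z) ∨
    (∃ i, i < c.length ∧ ∃ z, x = cat (y₀ ++ c.take i ++ [!(c.getD i false)]) z) ∨
    (∃ z, x = cat x₀ z) ∨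
    (∃ m, m.length = y₀.length ∧ m ≠ y₀ ∧ m ≠ x₀ ∧ ∃ z, x = cat m z) := by
  by_cases hyc : isPre (y₀ ++ c) x
  · exact Or.inl ⟨shf (y₀ ++ c).length x, (cat_shf hyc).symm⟩
  · by_cases hy : isPre y₀ x
    · right; left
      set t := shf y₀.length x with ht
      have hxt : x = cat y₀ t := (cat_shf hy).symm
      have hex : ∃ i, i < c.length ∧ t i ≠ c.getD i false := by
        by_contra hcon
        push_neg at hcon
        apply hyc
        intro j hj
        simp only [List.length_append] at hj
        by_cases hjy : j < y₀.length
        · rw [List.getD_append _ _ _ _ hjy]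
          exact hy j hjy
        · rw [List.getD_append_right _ _ _ _ (by omega)]
          rw [← hcon (j - y₀.length) (by omega)]
          rw [ht, shf]
          congr 1; omega
      classical
      obtain ⟨i, hiq, hit, hmin⟩ :
          ∃ i, i < c.length ∧ t i ≠ c.getD i false ∧
            ∀ j, j < i → ¬(j < c.length ∧ t j ≠ c.getD j false) :=
        ⟨Nat.find hex, (Nat.find_spec hex).1, (Nat.find_spec hex).2,
          fun j hj => Nat.find_min hex hj⟩
      refine ⟨i, hiq, shf (i+1) t, ?_⟩
      have htakelen : (c.take i).length = i := by simp; omega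
      have hlist : listOf t (i+1) = c.take i ++ [!(c.getD i false)] := by
        apply words_ext (by simp [htakelen])
        intro j hj
        simp only [listOf_length] at hj
        rw [listOf_getD hj]
        by_cases hji : j < i
        · rw [List.getD_append _ _ _ _ (by omega), getD_take' hji (by omega)]
          have hnot := hmin j hji
          push_neg at hnot
          exact hnot (by omega)
        · have hji' : j = i := by omega
          subst hji'
          rw [List.getD_append_right _ _ _ _ (by omega)]
          simp only [htakelen, Nat.sub_self, List.getD_cons_zero]
          revert hit
          cases c.getD j false <;> cases t j <;> simp
      rw [hxt, List.append_assoc, ← hlist, cat_append]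
      rw [cat_listOf t (i+1)]
    · by_cases hx0 : isPre x₀ x
      · exact Or.inr (Or.inr (Or.inl ⟨shf x₀.length x, (cat_shf hx0).symm⟩))
      · right; right; right
        refine ⟨listOf x y₀.length, by simp, ?_, ?_, shf y₀.length x, (cat_listOf x _).symm⟩
        · intro hm
          exact hy (hm ▸ isPre_listOf x y₀.length)
        · intro hm
          apply hx0
          have : isPre (listOf x y₀.length) x := isPre_listOf _ _
          rwa [hm] at this

include hlen hne in
lemma exp_ctr (x : Cantor) : expFun y₀ x₀ c (ctrFun y₀ x₀ c x) = x := by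
  rcases ctr_cases (c := c) hlen x with ⟨z, rfl⟩ | ⟨i, hi, z, rfl⟩ | ⟨z, rfl⟩ | ⟨m, hm, h1, h2, z, rfl⟩
  · rw [ctr_chart_y, exp_chart_y]
  · rw [ctr_chart_i hlen hne hi, exp_chart_i hlen hne hi]
  · rw [ctr_chart_zero hlen hne, exp_chart_x hlen hne]
  · rw [ctr_chart_other hlen hm h1 h2, exp_chart_other hlen hm h1 h2]

include hlen hne in
lemma ctr_exp (x : Cantor) : ctrFun y₀ x₀ c (expFun y₀ x₀ c x) = x := by
  rcases exp_cases (c := c) hlen x with ⟨z, rfl⟩ | ⟨i, hi, z, rfl⟩ | ⟨z, rfl⟩ | ⟨m, hm, h1, h2, z, rfl⟩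
  · rw [exp_chart_y, ctr_chart_y]
  · rw [exp_chart_i hlen hne hi, ctr_chart_i hlen hne hi]
  · rw [exp_chart_x hlen hne, ctr_chart_zero hlen hne]
  · rw [exp_chart_other hlen hm h1 h2, ctr_chart_other hlen hm h1 h2]

include hlen hne in
lemma ctr_charts (x : Cantor) :
    ∃ m w' : List Bool, isPre m x ∧ ∀ z, ctrFun y₀ x₀ c (cat m z) = cat w' z := by
  rcases ctr_cases (c := c) hlen x with ⟨z, rfl⟩ | ⟨i, hi, z, rfl⟩ | ⟨z, rfl⟩ | ⟨m, hm, h1, h2, z, rfl⟩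
  · exact ⟨y₀, y₀ ++ c, isPre_cat _ _, ctr_chart_y⟩
  · exact ⟨_, _, isPre_cat _ _, ctr_chart_i hlen hne hi⟩
  · exact ⟨_, _, isPre_cat _ _, ctr_chart_zero hlen hne⟩
  · exact ⟨m, m, isPre_cat _ _, ctr_chart_other hlen hm h1 h2⟩

include hlen hne in
lemma exp_charts (x : Cantor) :
    ∃ m w' : List Bool, isPre m x ∧ ∀ z, expFun y₀ x₀ c (cat m z) = cat w' z := by
  rcases exp_cases (c := c) hlen x with ⟨z, rfl⟩ | ⟨i, hi, z, rfl⟩ | ⟨z, rfl⟩ | ⟨m, hm, h1, h2, z, rfl⟩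
  · exact ⟨_, _, isPre_cat _ _, exp_chart_y⟩
  · exact ⟨_, _, isPre_cat _ _, exp_chart_i hlen hne hi⟩
  · exact ⟨_, _, isPre_cat _ _, exp_chart_x hlen hne⟩
  · exact ⟨m, m, isPre_cat _ _, exp_chart_other hlen hm h1 h2⟩

end CtrLemmas

noncomputable def ctrHomeo (y₀ x₀ c : List Bool) (hlen : x₀.length = y₀.length)
    (hne : x₀ ≠ y₀) : Cantor ≃ₜ Cantor :=
  Homeomorph.mk ⟨ctrFun y₀ x₀ c, expFun y₀ x₀ c, exp_ctr hlen hne, ctr_exp hlen hne⟩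
    (locV_continuous (ctr_charts hlen hne))
    (locV_continuous (exp_charts hlen hne))

lemma ctrHomeo_apply (y₀ x₀ c : List Bool) (hlen : x₀.length = y₀.length) (hne : x₀ ≠ y₀)
    (x : Cantor) : ctrHomeo y₀ x₀ c hlen hne x = ctrFun y₀ x₀ c x := rfl

lemma memV_ctrHomeo (y₀ x₀ c : List Bool) (hlen : x₀.length = y₀.length) (hne : x₀ ≠ y₀) :
    memV (ctrHomeo y₀ x₀ c hlen hne) := by
  intro x
  obtain ⟨m, w', hm, hc⟩ := ctr_charts hlen hne (c := c) x
  exact ⟨m, w', shf m.length x, (cat_shf hm).symm, hc⟩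

lemma ctrHomeo_fix (y₀ x₀ c : List Bool) (hlen : x₀.length = y₀.length) (hne : x₀ ≠ y₀) :
    ctrHomeo y₀ x₀ c hlen hne (cat y₀ (tailSeq c)) = cat y₀ (tailSeq c) := by
  rw [ctrHomeo_apply, ctr_chart_y, cat_append, cat_tailSeq]

lemma ctrHomeo_slope (y₀ x₀ c : List Bool) (hlen : x₀.length = y₀.length) (hne : x₀ ≠ y₀) :
    logSlope (ctrHomeo y₀ x₀ c hlen hne) (cat y₀ (tailSeq c)) = -(c.length : ℤ) := by
  apply logSlope_eq
  refine ⟨y₀, y₀ ++ c, tailSeq c, rfl, fun z => ctr_chart_y z, ?_⟩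
  simp

end GammaAux
namespace GammaAux

lemma zeroSeq_inQ2 : InQ2 zeroSeq := ⟨0, fun _ _ => rfl⟩

lemma memV_image_zero_inQ2 {v : Cantor ≃ₜ Cantor} (hv : memV v) : InQ2 (v zeroSeq) := by
  obtain ⟨m, w, y, h0, hm⟩ := hv zeroSeq
  have hy : y = zeroSeq := by
    funext j
    have := congrFun h0 (j + m.length)
    rw [cat_ge (by omega)] at this
    simp only [Nat.add_sub_cancel] at this
    exact this.symm
  refine ⟨w.length, fun k hk => ?_⟩
  rw [h0, hm, cat_ge hk, hy]
  rfl

lemma reach_aux : ∀ n (x : Cantor), (∀ k, n ≤ k → x k = false) →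
    ∃ v : Cantor ≃ₜ Cantor, memV v ∧ v zeroSeq = x := by
  intro n
  induction n with
  | zero =>
    intro x hx
    refine ⟨Homeomorph.refl _, memV_refl, ?_⟩
    funext k
    exact (hx k (by omega)).symm
  | succ n ih =>
    intro x hx
    by_cases hn : x n = false
    · refine ih x (fun k hk => ?_)
      rcases Nat.eq_or_lt_of_le hk with h | h
      · rw [← h]; exact hn
      · exact hx k h
    · have hn' : x n = true := by
        revert hn
        cases x n <;> simp
      set x' : Cantor := fun k => if k = n then false else x k with hx'
      obtain ⟨v, hv, hv0⟩ := ih x' (fun k hk => by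
        by_cases h : k = n
        · simp [hx', h]
        · simp only [hx', if_neg h]
          exact hx k (by omega))
      refine ⟨v.trans (flipAt (listOf x n)), memV_trans hv (memV_flipAt _), ?_⟩
      rw [Homeomorph.trans_apply, hv0, flipAt_apply]
      have hpre : isPre (listOf x n) x' := by
        intro i hi
        simp only [listOf_length] at hi
        rw [listOf_getD hi]
        show (if i = n then false else x i) = x i
        rw [if_neg (by omega : ¬ i = n)]
      rw [flipFun, if_pos hpre]
      funext k
      simp only [listOf_length]
      by_cases hk : k = n
      · rw [if_pos hk, hk]
        show (!(x' n)) = x n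
        have h5 : x' n = false := if_pos rfl
        rw [h5, hn']
        decide
      · rw [if_neg hk]
        show (if k = n then false else x k) = x k
        rw [if_neg hk]

lemma reach {x : Cantor} (hx : InQ2 x) :
    ∃ v : Cantor ≃ₜ Cantor, memV v ∧ v zeroSeq = x := by
  obtain ⟨n, hn⟩ := hx
  exact reach_aux n x hn

noncomputable def wpowN (w : Cantor ≃ₜ Cantor) : ℕ → (Cantor ≃ₜ Cantor)
  | 0 => Homeomorph.refl _
  | k+1 => (wpowN w k).trans w

lemma memV_wpowN {w : Cantor ≃ₜ Cantor} (hw : memV w) (k : ℕ) : memV (wpowN w k) := by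
  induction k with
  | zero => exact memV_refl
  | succ k ih => exact memV_trans ih hw

lemma wpowN_fix {w : Cantor ≃ₜ Cantor} {x : Cantor} (hfix : w x = x) (k : ℕ) :
    wpowN w k x = x := by
  induction k with
  | zero => rfl
  | succ k ih => rw [wpowN, Homeomorph.trans_apply, ih, hfix]

lemma logSlope_wpowN {w : Cantor ≃ₜ Cantor} {x : Cantor} (hw : memV w) (hfix : w x = x)
    (k : ℕ) : logSlope (wpowN w k) x = k * logSlope w x := by
  induction k with
  | zero => rw [wpowN]; rw [logSlope_refl]; simp
  | succ k ih =>
    rw [wpowN, logSlope_trans (memV_wpowN hw k) hw, ih, wpowN_fix hfix]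
    push_cast
    ring

lemma conjH_wpowN (ψ w : Cantor ≃ₜ Cantor) (k : ℕ) :
    conjH ψ (wpowN w k) = wpowN (conjH ψ w) k := by
  induction k with
  | zero => exact conjH_refl ψ
  | succ k ih => rw [wpowN, conjH_trans, ih, wpowN]

noncomputable def wpowZ (w : Cantor ≃ₜ Cantor) (k : ℤ) : Cantor ≃ₜ Cantor :=
  if 0 ≤ k then wpowN w k.toNat else (wpowN w (-k).toNat).symm

lemma memV_wpowZ {w : Cantor ≃ₜ Cantor} (hw : memV w) (k : ℤ) : memV (wpowZ w k) := by
  rw [wpowZ]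
  split
  · exact memV_wpowN hw _
  · exact memV_symm (memV_wpowN hw _)

lemma wpowZ_fix {w : Cantor ≃ₜ Cantor} {x : Cantor} (hfix : w x = x) (k : ℤ) :
    wpowZ w k x = x := by
  rw [wpowZ]
  split
  · exact wpowN_fix hfix _
  · have h := wpowN_fix hfix (-k).toNat
    apply (wpowN w (-k).toNat).injective
    rw [Homeomorph.apply_symm_apply, h]

lemma logSlope_wpowZ {w : Cantor ≃ₜ Cantor} {x : Cantor} (hw : memV w) (hfix : w x = x)
    (k : ℤ) : logSlope (wpowZ w k) x = k * logSlope w x := by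
  rw [wpowZ]
  split
  · rename_i h
    rw [logSlope_wpowN hw hfix]
    congr 1
    omega
  · rename_i h
    have h1 := logSlope_symm (memV_wpowN hw (-k).toNat) x
    rw [wpowN_fix hfix] at h1
    rw [h1, logSlope_wpowN hw hfix]
    have : ((-k).toNat : ℤ) = -k := by omega
    rw [this]; ring

lemma conjH_wpowZ (ψ w : Cantor ≃ₜ Cantor) (k : ℤ) :
    conjH ψ (wpowZ w k) = wpowZ (conjH ψ w) k := by
  rw [wpowZ, wpowZ]
  split
  · exact conjH_wpowN ψ w _
  · rw [conjH_symmv, conjH_wpowN]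

end GammaAux
namespace GammaAux

def Attr (w : Cantor ≃ₜ Cantor) (x : Cantor) : Prop :=
  ∀ O : Set Cantor, IsOpen O → x ∈ O →
    ∃ y, y ≠ x ∧ y ∈ O ∧ (∀ k, (⇑w)^[k] y ∈ O) ∧
      Filter.Tendsto (fun k => (⇑w)^[k] y) Filter.atTop (nhds x)

lemma shf_zero (t : Cantor) : shf 0 t = t := by
  funext n; simp [shf]

lemma iterate_conj {ψ w wbar : Cantor ≃ₜ Cantor}
    (hpt : ∀ y, wbar y = ψ.symm (w (ψ y))) :
    ∀ (k : ℕ) (y : Cantor), (⇑wbar)^[k] (ψ.symm y) = ψ.symm ((⇑w)^[k] y) := by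
  intro k
  induction k with
  | zero => intro y; simp
  | succ k ih =>
    intro y
    rw [Function.iterate_succ_apply', Function.iterate_succ_apply', ih, hpt,
      Homeomorph.apply_symm_apply]

lemma attr_conj {ψ w wbar : Cantor ≃ₜ Cantor} {x : Cantor}
    (hpt : ∀ y, wbar y = ψ.symm (w (ψ y))) (h : Attr w x) : Attr wbar (ψ.symm x) := by
  intro O' hO' hx'
  obtain ⟨y, hy, hyO, hiter, htend⟩ := h (⇑ψ.symm ⁻¹' O')
    (hO'.preimage ψ.symm.continuous) (by simpa using hx')
  refine ⟨ψ.symm y, fun he => hy (ψ.symm.injective he), hyO,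
    fun k => by rw [iterate_conj hpt]; exact hiter k, ?_⟩
  have h2 : Filter.Tendsto (fun k => ψ.symm ((⇑w)^[k] y)) Filter.atTop (nhds (ψ.symm x)) :=
    (ψ.symm.continuous.tendsto x).comp htend
  exact h2.congr (fun k => (iterate_conj hpt k y).symm)

lemma pre_eq_listOf {m : List Bool} {x : Cantor} {y : Cantor} (h : x = cat m y) :
    m = listOf x m.length := by
  apply words_ext (by simp)
  intro i hi
  rw [listOf_getD hi]
  exact ((congrFun h i).trans (cat_lt hi)).symm

lemma attr_of_neg {w : Cantor ≃ₜ Cantor} {x : Cantor} (hw : memV w)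
    (hfix : w x = x) (hneg : logSlope w x < 0) : Attr w x := by
  obtain ⟨m, w', y, hx, hm, hlen⟩ := memV_hasLogSlope hw x
  have hxw' : x = cat w' y := by rw [hx, ← hm y, ← hx, hfix]
  have hlt : m.length < w'.length := by omega
  set e := w'.length - m.length with he
  have he0 : 0 < e := by omega
  have hmx : m = listOf x m.length := pre_eq_listOf hx
  have hw'x : w' = listOf x w'.length := pre_eq_listOf hxw'
  have hperiod : ∀ j, x (j + m.length) = x (j + w'.length) := by
    intro j
    have h1 := congrFun hx (j + m.length)
    have h2 := congrFun hxw' (j + w'.length)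
    rw [cat_ge (by omega)] at h1
    rw [cat_ge (by omega)] at h2
    simp only [Nat.add_sub_cancel] at h1 h2
    rw [h1, h2]
  have step : ∀ K, m.length ≤ K → ∀ z, w (cat (listOf x K) z) = cat (listOf x (K + e)) z := by
    intro K hK z
    have hsplit : listOf x K = m ++ listOf (shf m.length x) (K - m.length) := by
      conv_lhs => rw [show K = m.length + (K - m.length) by omega, listOf_add]
      rw [← hmx]
    have happ := chart_ext hm (listOf (shf m.length x) (K - m.length)) z
    rw [hsplit, happ]
    have hword : w' ++ listOf (shf m.length x) (K - m.length) = listOf x (K + e) := by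
      apply words_ext
      · simp; omega
      · intro i hi
        simp only [List.length_append, listOf_length] at hi
        by_cases h1 : i < w'.length
        · rw [List.getD_append _ _ _ _ h1, listOf_getD (by omega)]
          conv_lhs => rw [hw'x]
          rw [listOf_getD h1]
        · push_neg at h1
          rw [List.getD_append_right _ _ _ _ h1, listOf_getD (by omega),
            listOf_getD (by omega)]
          show shf m.length x (i - w'.length) = x i
          have h3 := hperiod (i - w'.length)
          rw [show i - w'.length + w'.length = i by omega] at h3
          exact h3
    rw [hword]
  have iter : ∀ (k : ℕ) (K : ℕ), m.length ≤ K → ∀ z,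
      (⇑w)^[k] (cat (listOf x K) z) = cat (listOf x (K + k*e)) z := by
    intro k
    induction k with
    | zero => intro K hK z; simp
    | succ k ih =>
      intro K hK z
      rw [Function.iterate_succ_apply, step K hK z, ih (K+e) (by omega) z]
      congr 2
      ring
  intro O hO hxO
  obtain ⟨N, hN⟩ := open_nbhd_cyl hO hxO
  set K₀ := max N m.length with hK₀
  set zz : Cantor := fun _ => !(x K₀) with hzz
  refine ⟨cat (listOf x K₀) zz, ?_, ?_, ?_, ?_⟩
  · intro hcon
    have h4 := congrFun hcon K₀
    rw [cat_ge (by simp)] at h4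
    simp only [listOf_length, Nat.sub_self] at h4
    have h5 : zz 0 = !(x K₀) := rfl
    rw [h5] at h4
    revert h4
    cases x K₀ <;> simp
  · exact listOf_cat_mem (le_max_left _ _) hN zz
  · intro k
    rw [iter k K₀ (le_max_right _ _) zz]
    exact listOf_cat_mem (le_trans (le_max_left _ _) (Nat.le_add_right _ _)) hN zz
  · rw [tendsto_pi_nhds]
    intro i
    apply tendsto_nhds_of_eventually_eq
    rw [Filter.eventually_atTop]
    refine ⟨i + 1, fun k hk => ?_⟩
    have hke : k ≤ k * e := Nat.le_mul_of_pos_right k he0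
    rw [iter k K₀ (le_max_right _ _) zz, cat_lt (by simp; omega), listOf_getD (by omega)]

lemma not_attr_of_nonneg {w : Cantor ≃ₜ Cantor} {x : Cantor} (hw : memV w)
    (hfix : w x = x) (hpos : 0 ≤ logSlope w x) : ¬ Attr w x := by
  intro hattr
  obtain ⟨m, w', y, hx, hm, hlen⟩ := memV_hasLogSlope hw x
  have hxw' : x = cat w' y := by rw [hx, ← hm y, ← hx, hfix]
  have hd : w'.length ≤ m.length := by omega
  set d := m.length - w'.length with hdd
  have hmx : m = listOf x m.length := pre_eq_listOf hx
  have hw'x : w' = listOf x w'.length := pre_eq_listOf hxw'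
  have hperiod : ∀ j, x (j + m.length) = x (j + w'.length) := by
    intro j
    have h1 := congrFun hx (j + m.length)
    have h2 := congrFun hxw' (j + w'.length)
    rw [cat_ge (by omega)] at h1
    rw [cat_ge (by omega)] at h2
    simp only [Nat.add_sub_cancel] at h1 h2
    rw [h1, h2]
  have hxm : isPre m x := by rw [hx]; exact isPre_cat m y
  obtain ⟨y₀, hyne, hymem, hiter, htend⟩ := hattr (cyl m) (isOpen_cyl m) (mem_cyl.mpr hxm)
  set τ := shf m.length x with hτ
  have hxτ : x = cat m τ := (cat_shf hxm).symm
  by_cases hd0 : d = 0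
  · have hmw : m = w' := by
      rw [hmx, hw'x]
      congr 1
      omega
    have hidcyl : ∀ z ∈ cyl m, w z = z := by
      rintro z ⟨t, rfl⟩
      rw [hm t, ← hmw]
    have hconst : ∀ k, (⇑w)^[k] y₀ = y₀ := by
      intro k
      induction k with
      | zero => rfl
      | succ k ih => rw [Function.iterate_succ_apply', ih, hidcyl y₀ hymem]
    have hyx : y₀ = x := by
      apply tendsto_nhds_unique (l := Filter.atTop (α := ℕ)) _ htend
      exact Filter.Tendsto.congr (fun k => (hconst k).symm) tendsto_const_nhds
    exact hyne hyx
  · have hd0' : 0 < d := by omega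
    have hτper : ∀ j, τ (j + d) = τ j := by
      intro j
      show x (j + d + m.length) = x (j + m.length)
      have h1 := hperiod (j + d)
      rw [show j + d + w'.length = j + m.length by omega] at h1
      exact h1
    have hy₀m : isPre m y₀ := mem_cyl.mp hymem
    set ty := shf m.length y₀ with hty
    have iterform : ∀ k, (⇑w)^[k] y₀ = cat m (shf (k*d) ty) := by
      intro k
      induction k with
      | zero =>
        simp only [Nat.zero_mul, Function.iterate_zero, id_eq, shf_zero]
        exact (cat_shf hy₀m).symm
      | succ k ih =>
        rw [Function.iterate_succ_apply', ih, hm]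
        have hmem : cat w' (shf (k*d) ty) ∈ cyl m := by
          have h6 := hiter (k+1)
          rw [Function.iterate_succ_apply', ih, hm] at h6
          exact h6
        have hpre := mem_cyl.mp hmem
        have e1 : cat w' (shf (k*d) ty) = cat m (shf m.length (cat w' (shf (k*d) ty))) :=
          (cat_shf hpre).symm
        rw [e1]
        have hsh2 : shf m.length (cat w' (shf (k*d) ty)) = shf ((k+1)*d) ty := by
          rw [show m.length = d + w'.length by omega, ← shf_shf, shf_cat, shf_shf,
            show d + k*d = (k+1)*d by ring]
        rw [hsh2]
    have hcoord : ∀ j, ∃ Kj, ∀ k, Kj ≤ k → ty (j + k*d) = τ j := by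
      intro j
      have h1 : Filter.Tendsto (fun k => ((⇑w)^[k] y₀) (j + m.length)) Filter.atTop
          (nhds (x (j + m.length))) := tendsto_pi_nhds.mp htend (j + m.length)
      have hopen : ∀ᶠ b in nhds (x (j + m.length)), b = x (j + m.length) := by
        rw [nhds_discrete]
        exact Filter.eventually_pure.mpr rfl
      have h2 := h1.eventually hopen
      obtain ⟨Kj, hKj⟩ := Filter.eventually_atTop.mp h2
      refine ⟨Kj, fun k hk => ?_⟩
      have h7 := hKj k hk
      rw [iterform k, cat_ge (by omega)] at h7
      simp only [Nat.add_sub_cancel] at h7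
      exact h7
    choose Kf hKf using hcoord
    set Ksup := (Finset.range d).sup Kf with hKsup
    have hper_mul : ∀ j M, τ (j + M*d) = τ j := by
      intro j M
      induction M with
      | zero => simp
      | succ M ih => rw [show j + (M+1)*d = (j + M*d) + d by ring, hτper, ih]
    have hfinal : (⇑w)^[Ksup] y₀ = x := by
      have hsh : shf (Ksup * d) ty = τ := by
        funext i
        show ty (i + Ksup * d) = τ i
        have hjd : i % d < d := Nat.mod_lt _ hd0'
        have hKle : Kf (i % d) ≤ Ksup := Finset.le_sup (Finset.mem_range.mpr hjd)
        have h3 := hKf (i % d) (i / d + Ksup) (hKle.trans (Nat.le_add_left _ _))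
        have h4 : i % d + i / d * d = i := Nat.mod_add_div' i d
        have harith : i % d + (i / d + Ksup) * d = i + Ksup * d := by
          rw [Nat.add_mul]
          omega
        rw [harith] at h3
        rw [h3]
        conv_rhs => rw [show i = i % d + (i/d)*d from (Nat.mod_add_div' i d).symm]
        rw [hper_mul]
      rw [iterform, hsh, hxτ]
    have hfix_iter : (⇑w)^[Ksup] x = x := Function.iterate_fixed hfix Ksup
    have hinj : Function.Injective ((⇑w)^[Ksup]) := Function.Injective.iterate w.injective Ksup
    exact hyne (hinj (hfinal.trans hfix_iter.symm))

end GammaAux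
namespace GammaAux

lemma conjH_symm_apply (φ v : Cantor ≃ₜ Cantor) (y : Cantor) :
    conjH φ.symm v y = φ.symm (v (φ y)) := by
  rw [conjH_apply, Homeomorph.symm_symm]

lemma tailSeq_false : tailSeq [false] = zeroSeq := by
  funext j
  simp [tailSeq, zeroSeq, Nat.mod_one]

lemma cat_false_zero : cat [false] (tailSeq [false]) = zeroSeq := by
  rw [tailSeq_false]
  funext i
  by_cases h : i < 1
  · interval_cases i
    rw [cat_lt (by simp)]
    rfl
  · rw [cat_ge (by simp only [List.length_cons, List.length_nil]; omega)]
    rfl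

lemma key_slope {φ : Cantor ≃ₜ Cantor} (hφ : NormalizesV φ) {c : List Bool}
    (hc : PrimeWord c) (hclass : ∀ y : Cantor, InQ2 (φ y) ↔ InTailClass y c) :
    ∀ u : Cantor ≃ₜ Cantor, memV u → u zeroSeq = zeroSeq →
      logSlope (conjH φ.symm u) (φ.symm zeroSeq) = (c.length : ℤ) * logSlope u zeroSeq := by
  have hq0 : 0 < c.length := List.length_pos_iff.mpr hc.1
  have hpQ : InQ2 (φ (φ.symm zeroSeq)) := by
    rw [Homeomorph.apply_symm_apply]; exact zeroSeq_inQ2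
  obtain ⟨y₁, hy₁⟩ := (hclass _).mp hpQ
  set p := φ.symm zeroSeq with hp
  set y₀ := y₁ ++ c with hy₀def
  have hpy : p = cat y₀ (tailSeq c) := by rw [hy₀def, cat_append, cat_tailSeq]; exact hy₁
  have hy₀len : 0 < y₀.length := by
    rw [hy₀def]; simp; omega
  set x₀ := (!(y₀.getD 0 false)) :: y₀.drop 1 with hx₀def
  have hlenx : x₀.length = y₀.length := by
    rw [hx₀def]; simp; omega
  have hnex : x₀ ≠ y₀ := by
    intro h
    have h0 := congrArg (fun l => l.getD 0 false) h
    simp only [hx₀def, List.getD_cons_zero] at h0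
    revert h0
    cases y₀.getD 0 false <;> simp
  set r := ctrHomeo y₀ x₀ c hlenx hnex with hrdef
  have hrmem : memV r := memV_ctrHomeo _ _ _ _ _
  have hrfix : r p = p := by rw [hpy]; exact ctrHomeo_fix _ _ _ _ _
  have hrslope : logSlope r p = -(c.length : ℤ) := by
    rw [hpy]; exact ctrHomeo_slope _ _ _ _ _
  set ur := conjH φ r with hurdef
  have hurmem : memV ur := memV_conjH hφ hrmem
  have hur0 : ur zeroSeq = zeroSeq := by
    rw [hurdef, conjH_apply, ← hp, hrfix, hp, Homeomorph.apply_symm_apply]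
  have hconj_ur : conjH φ.symm ur = r := conjH_conjH φ r
  have hfixbar : ∀ u : Cantor ≃ₜ Cantor, u zeroSeq = zeroSeq →
      (conjH φ.symm u) p = p := by
    intro u hu0
    rw [conjH_symm_apply, hp, Homeomorph.apply_symm_apply, hu0]
  have hdvd : ∀ u : Cantor ≃ₜ Cantor, memV u → u zeroSeq = zeroSeq →
      (c.length : ℤ) ∣ logSlope (conjH φ.symm u) p := by
    intro u hu hu0
    exact fixpoint_slope_dvd hc hpy (memV_conjH_symm hφ hu) (hfixbar u hu0)
  set nr := logSlope ur zeroSeq with hnrdef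
  have hstar : ∀ u : Cantor ≃ₜ Cantor, memV u → u zeroSeq = zeroSeq →
      nr * logSlope (conjH φ.symm u) p + (logSlope u zeroSeq) * (c.length : ℤ) = 0 := by
    intro u hu hu0
    set n := logSlope u zeroSeq with hn
    set vstar := (wpowZ u nr).trans (wpowZ ur (-n)) with hvstar
    have hvmem : memV vstar := memV_trans (memV_wpowZ hu nr) (memV_wpowZ hurmem (-n))
    have hv0 : vstar zeroSeq = zeroSeq := by
      rw [hvstar, Homeomorph.trans_apply, wpowZ_fix hu0, wpowZ_fix hur0]
    have hslope0 : logSlope vstar zeroSeq = 0 := by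
      rw [hvstar, logSlope_trans (memV_wpowZ hu nr) (memV_wpowZ hurmem (-n)),
        wpowZ_fix hu0, logSlope_wpowZ hu hu0, logSlope_wpowZ hurmem hur0]
      ring
    have hDzero : logSlope (conjH φ.symm vstar) p = 0 :=
      slope_transfer_zero (ψ := φ) (w := vstar) (fun y => conjH_symm_apply φ vstar y)
        hvmem hv0 hslope0
    have hexp : conjH φ.symm vstar = (wpowZ (conjH φ.symm u) nr).trans (wpowZ r (-n)) := by
      rw [hvstar, conjH_trans, conjH_wpowZ, conjH_wpowZ, hconj_ur]
    rw [hexp, logSlope_trans (memV_wpowZ (memV_conjH_symm hφ hu) nr) (memV_wpowZ hrmem (-n)),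
      wpowZ_fix (hfixbar u hu0), logSlope_wpowZ (memV_conjH_symm hφ hu) (hfixbar u hu0),
      logSlope_wpowZ hrmem hrfix, hrslope] at hDzero
    linarith [hDzero]
  -- the element u₁ of slope -1 at zero
  have h1len : ([true] : List Bool).length = ([false] : List Bool).length := rfl
  have h1ne : ([true] : List Bool) ≠ [false] := by simp
  set u₁ := ctrHomeo [false] [true] [false] h1len h1ne with hu₁def
  have hu₁mem : memV u₁ := memV_ctrHomeo _ _ _ _ _
  have hu₁fix : u₁ zeroSeq = zeroSeq := by
    have h := ctrHomeo_fix [false] [true] [false] h1len h1ne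
    rwa [cat_false_zero] at h
  have hu₁slope : logSlope u₁ zeroSeq = -1 := by
    have h := ctrHomeo_slope [false] [true] [false] h1len h1ne
    rw [cat_false_zero] at h
    simpa using h
  have hstar1 := hstar u₁ hu₁mem hu₁fix
  obtain ⟨t, ht⟩ := hdvd u₁ hu₁mem hu₁fix
  have hqne : (c.length : ℤ) ≠ 0 := by exact_mod_cast hq0.ne'
  have hnrt : nr * t = 1 := by
    rw [hu₁slope, ht] at hstar1
    apply mul_left_cancel₀ hqne
    have : (c.length : ℤ) * (nr * t) - c.length = 0 := by linarith [hstar1]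
    linarith [this]
  have hattr : Attr ur zeroSeq := by
    have h5 : Attr r p := attr_of_neg hrmem hrfix (by
      rw [hrslope]
      have : (0:ℤ) < c.length := by exact_mod_cast hq0
      omega)
    have h6 := attr_conj (ψ := φ.symm) (w := r) (wbar := ur)
      (fun y => by rw [hurdef, conjH_apply, Homeomorph.symm_symm]) h5
    rw [hp, Homeomorph.symm_symm, Homeomorph.apply_symm_apply] at h6
    exact h6
  have hnrneg : nr < 0 := by
    by_contra hge
    push_neg at hge
    exact (not_attr_of_nonneg hurmem hur0 hge) hattr
  have hnr : nr = -1 := by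
    have hunit : IsUnit nr := IsUnit.of_mul_eq_one _ hnrt
    rcases Int.isUnit_iff.mp hunit with h | h
    · omega
    · exact h
  intro u hu hu0
  have hstaru := hstar u hu hu0
  rw [hnr] at hstaru
  linarith [hstaru]

end GammaAux
open GammaAux in
/-- Given `φ` normalizing `V` (with `k_φ = |c|` for a prime word `c`
whose tail class is `φ⁻¹(Q₂)`), there is a unique map `γ_φ : Q₂ → ℤ` with
`γ_φ(v·0) = log₂((φ⁻¹vφ)'(φ⁻¹0)) − k_φ·log₂(v'(0))` for all `v ∈ V`; moreover it
satisfies `γ_φ(vx) − γ_φ(x) = log₂((φ⁻¹vφ)'(φ⁻¹x)) − k_φ·log₂(v'(x))` for all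
`v ∈ V`, `x ∈ Q₂`. -/
theorem gamma_exists_unique (φ : Cantor ≃ₜ Cantor) (hφ : NormalizesV φ)
    (c : List Bool) (hc : PrimeWord c)
    (hclass : ∀ y : Cantor, InQ2 (φ y) ↔ InTailClass y c) :
    (∃! γ : Cantor → ℤ,
      (∀ x, ¬ InQ2 x → γ x = 0) ∧
      (∀ v : Cantor ≃ₜ Cantor, memV v →
        γ (v zeroSeq) =
          logSlope (conjH φ.symm v) (φ.symm zeroSeq) - (c.length : ℤ) * logSlope v zeroSeq)) ∧
    (∀ γ : Cantor → ℤ,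
      ((∀ x, ¬ InQ2 x → γ x = 0) ∧
       (∀ v : Cantor ≃ₜ Cantor, memV v →
        γ (v zeroSeq) =
          logSlope (conjH φ.symm v) (φ.symm zeroSeq) - (c.length : ℤ) * logSlope v zeroSeq)) →
      ∀ (v : Cantor ≃ₜ Cantor), memV v → ∀ x, InQ2 x →
        γ (v x) - γ x =
          logSlope (conjH φ.symm v) (φ.symm x) - (c.length : ℤ) * logSlope v x) := by
  classical
  have hkey := key_slope hφ hc hclass
  set F : (Cantor ≃ₜ Cantor) → ℤ := fun v =>
    logSlope (conjH φ.symm v) (φ.symm zeroSeq) - (c.length : ℤ) * logSlope v zeroSeq with hF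
  have hFeq : ∀ v w : Cantor ≃ₜ Cantor, memV v → memV w → v zeroSeq = w zeroSeq →
      F v = F w := by
    intro v w hv hw hvw
    set u := v.trans w.symm with hu
    have humem : memV u := memV_trans hv (memV_symm hw)
    have hufix : u zeroSeq = zeroSeq := by
      rw [hu, Homeomorph.trans_apply, hvw, Homeomorph.symm_apply_apply]
    have hveq : v = u.trans w := by
      apply Homeomorph.ext
      intro x
      rw [Homeomorph.trans_apply, hu, Homeomorph.trans_apply, Homeomorph.apply_symm_apply]
    have hubar_fix : (conjH φ.symm u) (φ.symm zeroSeq) = φ.symm zeroSeq := by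
      rw [conjH_symm_apply, Homeomorph.apply_symm_apply, hufix]
    rw [hF]
    simp only
    rw [hveq, conjH_trans, logSlope_trans (memV_conjH_symm hφ humem) (memV_conjH_symm hφ hw),
      hubar_fix, logSlope_trans humem hw, hufix, hkey u humem hufix]
    ring
  set γ0 : Cantor → ℤ := fun x =>
    if h : ∃ v : Cantor ≃ₜ Cantor, memV v ∧ v zeroSeq = x then F h.choose else 0 with hγ0
  have hγA : ∀ x, ¬ InQ2 x → γ0 x = 0 := by
    intro x hx
    rw [hγ0]
    simp only
    rw [dif_neg]
    rintro ⟨v, hv, hveq⟩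
    exact hx (hveq ▸ memV_image_zero_inQ2 hv)
  have hγB : ∀ v : Cantor ≃ₜ Cantor, memV v → γ0 (v zeroSeq) = F v := by
    intro v hv
    have hex : ∃ w : Cantor ≃ₜ Cantor, memV w ∧ w zeroSeq = v zeroSeq := ⟨v, hv, rfl⟩
    rw [hγ0]
    simp only
    rw [dif_pos hex]
    exact hFeq _ _ hex.choose_spec.1 hv hex.choose_spec.2
  constructor
  · refine ⟨γ0, ⟨hγA, fun v hv => hγB v hv⟩, ?_⟩
    intro γ' ⟨hA', hB'⟩
    funext x
    by_cases hx : InQ2 x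
    · obtain ⟨w, hw, hw0⟩ := reach hx
      rw [← hw0, hB' w hw, hγB w hw]
    · rw [hA' x hx, hγA x hx]
  · rintro γ ⟨hA, hB⟩ v hv x hx
    obtain ⟨w, hw, hw0⟩ := reach hx
    have h1 : γ x = F w := by rw [← hw0]; exact hB w hw
    have h2 : v x = (w.trans v) zeroSeq := by rw [Homeomorph.trans_apply, hw0]
    have h3 : γ (v x) = F (w.trans v) := by
      rw [h2]
      exact hB _ (memV_trans hw hv)
    have hwbar0 : (conjH φ.symm w) (φ.symm zeroSeq) = φ.symm x := by
      rw [conjH_symm_apply, Homeomorph.apply_symm_apply, hw0]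
    rw [h1, h3, hF]
    simp only
    rw [conjH_trans, logSlope_trans (memV_conjH_symm hφ hw) (memV_conjH_symm hφ hv), hwbar0,
      logSlope_trans hw hv, hw0]
    ring
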